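/- Fix α > β > 0, a probability measure μ on [0,∞), and ε > 0. Then the equation F(σ, ε) = 1/(α−β), where F(σ, ε) = (1/σ)·∫ [u² + ε²(α−β)² e^σ/(α − β e^σ)²]⁻¹ dμ(u), has a unique solution σ ∈ (0, log(α/β)). -/

import Mathlib

open MeasureTheory Filter Topology

set_option maxHeartbeats 1000000 in
/-- Fix `α > β > 0`, a probability measure `μ` on `[0,∞)`, and `ε > 0`.  Then the equation
`F(σ, ε) = 1/(α−β)`, where
`F(σ, ε) = (1/σ)·∫ [u² + ε²(α−β)² e^σ/(α − β e^σ)²]⁻¹ dμ(u)`, has a unique solution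
`σ ∈ (0, log(α/β))`. -/
theorem F_equation_unique_solution
    (α β : ℝ) (hβ : 0 < β) (hαβ : β < α)
    (μ : Measure ℝ) [IsProbabilityMeasure μ] (hμ : μ (Set.Iio 0) = 0)
    (ε : ℝ) (hε : 0 < ε) :
    ∃! σ : ℝ, σ ∈ Set.Ioo 0 (Real.log (α / β)) ∧
      (1 / σ) *
        ∫ u, (u ^ 2 + ε ^ 2 * (α - β) ^ 2 * Real.exp σ / (α - β * Real.exp σ) ^ 2)⁻¹ ∂μ
        = 1 / (α - β) := by
  have hα : 0 < α := hβ.trans hαβ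
  have hab : 0 < α - β := sub_pos.mpr hαβ
  set L := Real.log (α / β) with hLdef
  have hL : 0 < L := Real.log_pos ((one_lt_div hβ).mpr hαβ)
  have hexpL : Real.exp L = α / β := Real.exp_log (by positivity)
  have hden : ∀ {σ : ℝ}, σ < L → 0 < α - β * Real.exp σ := by
    intro σ hσ
    have h1 : Real.exp σ < α / β := hexpL ▸ Real.exp_lt_exp.mpr hσ
    rw [lt_div_iff₀ hβ] at h1
    nlinarith
  set c : ℝ → ℝ := fun σ => ε ^ 2 * (α - β) ^ 2 * Real.exp σ / (α - β * Real.exp σ) ^ 2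
    with hcdef
  have hcpos : ∀ {σ : ℝ}, σ < L → 0 < c σ := by
    intro σ hσ
    have h := hden hσ
    simp only [hcdef]
    exact div_pos (mul_pos (mul_pos (pow_pos hε 2) (pow_pos hab 2)) (Real.exp_pos σ))
      (pow_pos h 2)
  have hcmono : ∀ {σ₁ σ₂ : ℝ}, σ₁ < σ₂ → σ₂ < L → c σ₁ < c σ₂ := by
    intro σ₁ σ₂ h12 h2
    have hd1 := hden (h12.trans h2)
    have hd2 := hden h2
    have he12 : Real.exp σ₁ < Real.exp σ₂ := Real.exp_lt_exp.mpr h12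
    have he1 : (0:ℝ) < Real.exp σ₁ := Real.exp_pos _
    have he2 : (0:ℝ) < Real.exp σ₂ := Real.exp_pos _
    have hK : (0:ℝ) < ε ^ 2 * (α - β) ^ 2 := mul_pos (pow_pos hε 2) (pow_pos hab 2)
    simp only [hcdef]
    rw [div_lt_div_iff₀ (pow_pos hd1 2) (pow_pos hd2 2)]
    nlinarith [mul_pos hK (mul_pos (sub_pos.mpr he12) (mul_pos hd1 hd2)),
      mul_pos hK (mul_pos (sub_pos.mpr he12) (mul_pos (mul_pos hβ he1) hd2)),
      mul_pos hK (mul_pos (sub_pos.mpr he12) (mul_pos (mul_pos hβ he2) hd1))]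
  set I : ℝ → ℝ := fun σ => ∫ u, (u ^ 2 + c σ)⁻¹ ∂μ with hIdef
  show ∃! σ : ℝ, σ ∈ Set.Ioo 0 L ∧ (1 / σ) * I σ = 1 / (α - β)
  -- integrability
  have hint : ∀ {σ : ℝ}, σ < L → Integrable (fun u : ℝ => (u ^ 2 + c σ)⁻¹) μ := by
    intro σ hσ
    have hc := hcpos hσ
    refine Integrable.mono' (integrable_const ((c σ)⁻¹)) ?_ ?_
    · refine (Continuous.inv₀ (by continuity) ?_).aestronglyMeasurable
      intro u; nlinarith [sq_nonneg u]
    · refine Eventually.of_forall fun u => ?_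
      have h1 : 0 < u ^ 2 + c σ := by nlinarith [sq_nonneg u]
      rw [Real.norm_eq_abs, abs_of_pos (inv_pos.mpr h1)]
      exact inv_anti₀ hc (by nlinarith [sq_nonneg u])
  -- positivity of the integral
  have hIpos : ∀ {σ : ℝ}, σ < L → 0 < I σ := by
    intro σ hσ
    have hc := hcpos hσ
    have hnn : (0:ℝ → ℝ) ≤ᵐ[μ] fun u : ℝ => (u ^ 2 + c σ)⁻¹ :=
      Eventually.of_forall fun u => inv_nonneg.mpr (by nlinarith [sq_nonneg u])
    rw [hIdef]
    rw [integral_pos_iff_support_of_nonneg_ae hnn (hint hσ)]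
    have hsupp : (Function.support fun u : ℝ => (u ^ 2 + c σ)⁻¹) = Set.univ := by
      ext u
      simp only [Function.mem_support, Set.mem_univ, iff_true]
      have h1 : 0 < u ^ 2 + c σ := by nlinarith [sq_nonneg u]
      positivity
    rw [hsupp]
    simp
  -- antitonicity of the integral
  have hImono : ∀ {σ₁ σ₂ : ℝ}, σ₁ ≤ σ₂ → σ₂ < L → I σ₂ ≤ I σ₁ := by
    intro σ₁ σ₂ h12 h2
    rcases eq_or_lt_of_le h12 with rfl | h12
    · exact le_rfl
    · have hc12 : c σ₁ < c σ₂ := hcmono h12 h2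
      have hc1 := hcpos (h12.trans h2)
      refine integral_mono (hint h2) (hint (h12.trans h2)) fun u => ?_
      exact inv_anti₀ (by nlinarith [sq_nonneg u]) (by nlinarith)
  -- strict antitonicity of F
  have hFanti : ∀ {σ₁ σ₂ : ℝ}, σ₁ ∈ Set.Ioo 0 L → σ₂ ∈ Set.Ioo 0 L → σ₁ < σ₂ →
      (1 / σ₂) * I σ₂ < (1 / σ₁) * I σ₁ := by
    intro σ₁ σ₂ h1 h2 h12
    have hI1 := hIpos h1.2
    have hIle : I σ₂ ≤ I σ₁ := hImono h12.le h2.2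
    have hinv : 1 / σ₂ < 1 / σ₁ := one_div_lt_one_div_of_lt h1.1 h12
    have hσ₂pos : (0:ℝ) < σ₂ := h2.1
    calc (1 / σ₂) * I σ₂ ≤ (1 / σ₂) * I σ₁ :=
          mul_le_mul_of_nonneg_left hIle (by positivity)
      _ < (1 / σ₁) * I σ₁ := mul_lt_mul_of_pos_right hinv hI1
  -- continuity of I on Ioo 0 L
  have hIcont : ∀ {σ₀ : ℝ}, σ₀ ∈ Set.Ioo 0 L → ContinuousAt I σ₀ := by
    intro σ₀ h0
    have hc0 := hcpos h0.2
    have hccont : ContinuousAt c σ₀ := by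
      have hd := hden h0.2
      simp only [hcdef]
      exact ContinuousAt.div (by fun_prop) (by fun_prop) (pow_ne_zero 2 hd.ne')
    have hev : ∀ᶠ σ in 𝓝 σ₀, c σ₀ / 2 < c σ :=
      hccont.eventually (eventually_gt_nhds (by linarith))
    rw [hIdef]
    refine continuousAt_of_dominated (bound := fun _ : ℝ => (c σ₀ / 2)⁻¹) ?_ ?_ ?_ ?_
    · filter_upwards [hev] with σ hσ
      refine (Continuous.inv₀ (by continuity) ?_).aestronglyMeasurable
      intro u; nlinarith [sq_nonneg u]
    · filter_upwards [hev] with σ hσ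
      refine Eventually.of_forall fun u => ?_
      have h1 : 0 < u ^ 2 + c σ := by nlinarith [sq_nonneg u]
      rw [Real.norm_eq_abs, abs_of_pos (inv_pos.mpr h1)]
      exact inv_anti₀ (by linarith) (by nlinarith [sq_nonneg u])
    · exact integrable_const _
    · refine Eventually.of_forall fun u => ?_
      refine ContinuousAt.inv₀ (continuousAt_const.add hccont) ?_
      nlinarith [sq_nonneg u]
  -- pick σ₁ small with F σ₁ > 1/(α-β)
  set m := I (L / 2) with hmdef
  have hm : 0 < m := hIpos (by linarith)
  set σ₁ := min (L / 2) (m * (α - β) / 2) with hσ₁def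
  have hσ₁pos : 0 < σ₁ := lt_min (by linarith) (by positivity)
  have hσ₁L : σ₁ < L := (min_le_left _ _).trans_lt (by linarith)
  have hF1 : 1 / (α - β) < (1 / σ₁) * I σ₁ := by
    have hIlb : m ≤ I σ₁ := hImono (min_le_left _ _) (by linarith)
    have hσ₁le : σ₁ ≤ m * (α - β) / 2 := min_le_right _ _
    have h1 : m / σ₁ ≤ I σ₁ / σ₁ := by gcongr
    have h2 : 2 / (α - β) ≤ m / σ₁ := by
      rw [div_le_div_iff₀ hab hσ₁pos]; linarith
    have h3 : 1 / (α - β) < 2 / (α - β) := by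
      rw [div_lt_div_iff₀ hab hab]; nlinarith
    rw [one_div_mul_eq_div]
    linarith
  -- pick σ₂ near L with F σ₂ < 1/(α-β)
  have hδ : 0 < Real.sqrt (ε ^ 2 * (α - β) * L / 2) := Real.sqrt_pos.mpr (by positivity)
  have htend : Tendsto (fun σ => α - β * Real.exp σ) (𝓝[<] L) (𝓝 0) := by
    have hcont : ContinuousAt (fun σ => α - β * Real.exp σ) L := by fun_prop
    have h := hcont.tendsto.mono_left (nhdsWithin_le_nhds (s := Set.Iio L))
    have h0 : α - β * Real.exp L = 0 := by
      rw [hexpL]; field_simp; ring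
    rwa [h0] at h
  have hev2 : ∀ᶠ σ in 𝓝[<] L,
      σ ∈ Set.Ioo 0 L ∧ L / 2 < σ ∧
        α - β * Real.exp σ < Real.sqrt (ε ^ 2 * (α - β) * L / 2) := by
    have h1 : ∀ᶠ σ in 𝓝[<] L, σ < L := eventually_mem_nhdsWithin.mono fun σ h => h
    have h2 : ∀ᶠ σ in 𝓝[<] L, L / 2 < σ :=
      (eventually_gt_nhds (by linarith : L / 2 < L)).filter_mono nhdsWithin_le_nhds
    have h3 : ∀ᶠ σ in 𝓝[<] L,
        α - β * Real.exp σ < Real.sqrt (ε ^ 2 * (α - β) * L / 2) :=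
      htend.eventually (eventually_lt_nhds hδ)
    filter_upwards [h1, h2, h3] with σ hs1 hs2 hs3
    exact ⟨⟨by linarith, hs1⟩, hs2, hs3⟩
  obtain ⟨σ₂, hσ₂mem, hσ₂half, hσ₂close⟩ := hev2.exists
  have hF2 : (1 / σ₂) * I σ₂ < 1 / (α - β) := by
    have hd2 := hden hσ₂mem.2
    have hc2 := hcpos hσ₂mem.2
    have he2 : (1:ℝ) ≤ Real.exp σ₂ := Real.one_le_exp hσ₂mem.1.le
    have hsq : (α - β * Real.exp σ₂) ^ 2 < ε ^ 2 * (α - β) * L / 2 := by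
      have h1 : (α - β * Real.exp σ₂) ^ 2 < Real.sqrt (ε ^ 2 * (α - β) * L / 2) ^ 2 :=
        pow_lt_pow_left₀ hσ₂close hd2.le (two_ne_zero)
      rwa [Real.sq_sqrt (by positivity)] at h1
    have hclb : 2 * (α - β) / L < c σ₂ := by
      simp only [hcdef]
      rw [div_lt_div_iff₀ hL (pow_pos hd2 2)]
      nlinarith [mul_pos hab hL, mul_pos (mul_pos (pow_pos hε 2) (pow_pos hab 2)) hL]
    have hIub : I σ₂ ≤ (c σ₂)⁻¹ := by
      have h := integral_mono (hint hσ₂mem.2) (integrable_const ((c σ₂)⁻¹))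
        (fun u => inv_anti₀ hc2 (by nlinarith [sq_nonneg u]))
      simpa using h
    have hσ₂pos : (0:ℝ) < σ₂ := hσ₂mem.1
    have key : α - β < σ₂ * c σ₂ := by
      have hclb' : 2 * (α - β) < c σ₂ * L := by
        rw [div_lt_iff₀ hL] at hclb; linarith
      nlinarith [mul_lt_mul_of_pos_left hσ₂half hc2]
    calc (1 / σ₂) * I σ₂ ≤ (1 / σ₂) * (c σ₂)⁻¹ :=
          mul_le_mul_of_nonneg_left hIub (by positivity)
      _ = (σ₂ * c σ₂)⁻¹ := by rw [mul_inv, one_div]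
      _ < 1 / (α - β) := by
          rw [one_div]
          exact inv_strictAnti₀ hab key
  -- existence via IVT
  have hσ₁₂ : σ₁ < σ₂ := by
    by_contra h
    push_neg at h
    rcases eq_or_lt_of_le h with rfl | h
    · linarith
    · exact absurd (hFanti hσ₂mem ⟨hσ₁pos, hσ₁L⟩ h) (by linarith)
  have hsub : Set.Icc σ₁ σ₂ ⊆ Set.Ioo 0 L := fun x hx =>
    ⟨lt_of_lt_of_le hσ₁pos hx.1, lt_of_le_of_lt hx.2 hσ₂mem.2⟩
  have hFcont : ContinuousOn (fun σ => (1 / σ) * I σ) (Set.Icc σ₁ σ₂) := by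
    intro x hx
    have hx' := hsub hx
    exact (ContinuousAt.mul
      (continuousAt_const.div continuousAt_id hx'.1.ne') (hIcont hx')).continuousWithinAt
  have hivt := intermediate_value_Icc' hσ₁₂.le hFcont
  have hy : 1 / (α - β) ∈ Set.Icc ((1 / σ₂) * I σ₂) ((1 / σ₁) * I σ₁) := ⟨hF2.le, hF1.le⟩
  obtain ⟨σ, hσmem, hσeq0⟩ := hivt hy
  have hσeq : 1 / σ * I σ = 1 / (α - β) := hσeq0
  refine ⟨σ, ⟨hsub hσmem, hσeq⟩, ?_⟩
  rintro y ⟨hymem, hyeq⟩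
  have hσmem' := hsub hσmem
  by_contra hne
  rcases lt_or_gt_of_ne hne with h | h
  · have hlt := hFanti hymem hσmem' h
    rw [hyeq, hσeq] at hlt
    exact lt_irrefl _ hlt
  · have hlt := hFanti hσmem' hymem h
    rw [hyeq, hσeq] at hlt
    exact lt_irrefl _ hlt
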